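/- Let p be a prime and suppose the formal power series M_p(q) = (1/(q;q)_∞)(h(q) - p h(q^p)) has positive coefficients at q^n for all n ≥ 1. Then for every integer m ≥ 2, the series (1/(q;q)_∞)(h(q) - p^m h(q^{p^m})) also has positive coefficients at q^n for all n ≥ 1. -/

import Mathlib

open PowerSeries Finset

/-- `h(q) = ∑_{n≥1} (-1)^{n+1} q^{n(n+1)/2}/(1-q^n)`, with `1/(1-q^n)` the geometric
series; defined coefficientwise (only terms with `n(n+1)/2 ≤ N` contribute to `q^N`). -/
noncomputable def h : PowerSeries ℝ :=
  PowerSeries.mk fun N => ∑ n ∈ Finset.Icc 1 N,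
    if n * (n + 1) / 2 ≤ N ∧ n ∣ (N - n * (n + 1) / 2) then (-1 : ℝ) ^ (n + 1) else 0

/-- Substitution `q ↦ q^d`: the coefficient of `q^{dn}` in `substPow d f` is the
coefficient of `q^n` in `f`, all other coefficients vanish. -/
noncomputable def substPow (d : ℕ) (f : PowerSeries ℝ) : PowerSeries ℝ :=
  PowerSeries.mk fun N => if d ∣ N then PowerSeries.coeff (N / d) f else 0

/-- `(q;q)_∞ = ∏_{n≥1} (1-q^n)`, defined coefficientwise by the stable truncation. -/
noncomputable def euler : PowerSeries ℝ :=
  PowerSeries.mk fun N =>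
    PowerSeries.coeff N (∏ n ∈ Finset.Icc 1 N, (1 - PowerSeries.X ^ n))

/-- `∏_{n ≥ 1, d ∤ n} (1-q^n)`, defined coefficientwise by the stable truncation. -/
noncomputable def eulerNotDvd (d : ℕ) : PowerSeries ℝ :=
  PowerSeries.mk fun N => PowerSeries.coeff N
    (∏ n ∈ (Finset.Icc 1 N).filter (fun n => ¬ d ∣ n), (1 - PowerSeries.X ^ n))

/-- `M_p(q) = (1/(q;q)_∞)(h(q) - p h(q^p))`. -/
noncomputable def Mser (p : ℕ) : PowerSeries ℝ :=
  euler⁻¹ * (h - (p : PowerSeries ℝ) * substPow p h)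



@[simp] lemma coeff_substPow (d N : ℕ) (f : PowerSeries ℝ) :
    PowerSeries.coeff N (substPow d f) =
      if d ∣ N then PowerSeries.coeff (N / d) f else 0 := coeff_mk _ _

lemma substPow_one (d : ℕ) (hd : 0 < d) : substPow d 1 = 1 := by
  ext N
  simp only [coeff_substPow, PowerSeries.coeff_one]
  rcases eq_or_ne N 0 with rfl | hN
  · simp
  · rw [if_neg hN]
    split_ifs with h1 h2
    · exact absurd (Nat.eq_zero_of_dvd_of_div_eq_zero h1 h2) hN
    · rfl
    · rfl

lemma substPow_mul (d : ℕ) (hd : 0 < d) (f g : PowerSeries ℝ) :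
    substPow d (f * g) = substPow d f * substPow d g := by
  ext N
  have key : ∀ p : ℕ × ℕ, p ∈ antidiagonal N →
      (PowerSeries.coeff p.1 (substPow d f)) * (PowerSeries.coeff p.2 (substPow d g)) =
      if d ∣ p.1 ∧ d ∣ p.2 then
        PowerSeries.coeff (p.1 / d) f * PowerSeries.coeff (p.2 / d) g else 0 := by
    intro p _
    simp only [coeff_substPow]
    split_ifs with h1 h2 h3 h4 <;> simp_all
  rw [PowerSeries.coeff_mul (φ := substPow d f), Finset.sum_congr rfl key, coeff_substPow]
  by_cases hN : d ∣ N
  · rw [if_pos hN, PowerSeries.coeff_mul, ← Finset.sum_filter]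
    refine Finset.sum_nbij' (fun p => (p.1 * d, p.2 * d)) (fun p => (p.1 / d, p.2 / d))
      ?_ ?_ ?_ ?_ ?_
    · rintro ⟨a, b⟩ hp
      simp only [HasAntidiagonal.mem_antidiagonal] at hp
      simp only [Finset.mem_filter, HasAntidiagonal.mem_antidiagonal]
      refine ⟨by rw [← Nat.add_mul, hp, Nat.div_mul_cancel hN], dvd_mul_left d a, dvd_mul_left d b⟩
    · rintro ⟨a, b⟩ hp
      simp only [Finset.mem_filter, HasAntidiagonal.mem_antidiagonal] at hp
      obtain ⟨hab, ⟨u, hu⟩, ⟨v, hv⟩⟩ := hp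
      simp only [HasAntidiagonal.mem_antidiagonal]
      subst hu hv
      have hN2 : N = d * (u + v) := by rw [Nat.mul_add]; omega
      rw [Nat.mul_div_cancel_left _ hd, Nat.mul_div_cancel_left _ hd, hN2,
        Nat.mul_div_cancel_left _ hd]
    · rintro ⟨a, b⟩ _
      simp [Nat.mul_div_cancel _ hd]
    · rintro ⟨a, b⟩ hp
      simp only [Finset.mem_filter, HasAntidiagonal.mem_antidiagonal] at hp
      obtain ⟨hab, ha, hb⟩ := hp
      simp [Nat.div_mul_cancel ha, Nat.div_mul_cancel hb]
    · rintro ⟨a, b⟩ _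
      simp [Nat.mul_div_cancel _ hd]
  · rw [if_neg hN]
    refine (Finset.sum_eq_zero ?_).symm
    rintro ⟨a, b⟩ hp
    rw [if_neg]
    rintro ⟨ha, hb⟩
    exact hN (HasAntidiagonal.mem_antidiagonal.mp hp ▸ dvd_add ha hb)

lemma substPow_sub (d : ℕ) (f g : PowerSeries ℝ) :
    substPow d (f - g) = substPow d f - substPow d g := by
  ext N
  simp only [coeff_substPow, map_sub]
  split_ifs <;> simp

lemma substPow_C_mul (d : ℕ) (c : ℝ) (f : PowerSeries ℝ) :
    substPow d (PowerSeries.C c * f) = PowerSeries.C c * substPow d f := by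
  ext N
  simp only [coeff_substPow, PowerSeries.coeff_C_mul]
  split_ifs <;> simp

lemma substPow_comp (a b : ℕ) (ha : 0 < a) (hb : 0 < b) (f : PowerSeries ℝ) :
    substPow a (substPow b f) = substPow (a * b) f := by
  ext N
  simp only [coeff_substPow]
  by_cases h1 : a ∣ N
  · rw [if_pos h1]
    have hiff : b ∣ N / a ↔ a * b ∣ N := Nat.dvd_div_iff_mul_dvd h1
    by_cases h2 : b ∣ N / a
    · rw [if_pos h2, if_pos (hiff.mp h2), Nat.div_div_eq_div_mul]
    · rw [if_neg h2, if_neg (fun hh => h2 (hiff.mpr hh))]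
  · rw [if_neg h1, if_neg fun hab => h1 (dvd_of_mul_right_dvd hab)]

lemma substPow_X_pow (d n : ℕ) (hd : 0 < d) :
    substPow d (PowerSeries.X ^ n) = PowerSeries.X ^ (d * n) := by
  ext N
  simp only [coeff_substPow, PowerSeries.coeff_X_pow]
  by_cases h : d ∣ N
  · rw [if_pos h]
    obtain ⟨c, rfl⟩ := h
    rw [Nat.mul_div_cancel_left _ hd]
    by_cases hc : c = n
    · subst hc; simp
    · rw [if_neg hc, if_neg (fun hh => hc (Nat.eq_of_mul_eq_mul_left hd hh))]
  · rw [if_neg h, if_neg]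
    rintro rfl
    exact h ⟨n, rfl⟩

/-- multiplying by a series that is `1 + O(X^{i+1})` does not change `coeff i`. -/
lemma coeff_mul_high (f g : PowerSeries ℝ) (i : ℕ) (hg0 : PowerSeries.coeff 0 g = 1)
    (hg : ∀ j, j ≠ 0 → j ≤ i → PowerSeries.coeff j g = 0) :
    PowerSeries.coeff i (f * g) = PowerSeries.coeff i f := by
  rw [PowerSeries.coeff_mul]
  rw [Finset.sum_eq_single (i, 0)]
  · simp [hg0]
  · rintro ⟨a, b⟩ hp hne
    have hab : a + b = i := HasAntidiagonal.mem_antidiagonal.mp hp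
    have hb : b ≠ 0 := by rintro rfl; exact hne (by simp [← hab])
    rw [hg b hb (by omega), mul_zero]
  · intro hni
    exact absurd (HasAntidiagonal.mem_antidiagonal.mpr (by simp)) hni

/-- products of `(1 - X^n)` over sets of large `n` are `1 + O(X^{i+1})`. -/
lemma coeff_prod_high (s : Finset ℕ) (i : ℕ) (hs : ∀ n ∈ s, i < n) :
    (PowerSeries.coeff (R := ℝ) 0 (∏ n ∈ s, (1 - PowerSeries.X ^ n)) = 1) ∧
    (∀ j, j ≠ 0 → j ≤ i → PowerSeries.coeff (R := ℝ) j (∏ n ∈ s, (1 - PowerSeries.X ^ n)) = 0) := by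
  classical
  induction s using Finset.induction_on with
  | empty =>
    refine ⟨by simp, fun j hj hji => by simp [PowerSeries.coeff_one, hj]⟩
  | @insert n t hns ih =>
    have hn : i < n := hs n (Finset.mem_insert_self n t)
    obtain ⟨ih0, ihj⟩ := ih fun x hx => hs x (Finset.mem_insert_of_mem hx)
    rw [Finset.prod_insert hns]
    have key : ∀ j, j ≤ i → PowerSeries.coeff (R := ℝ) j
        ((1 - PowerSeries.X ^ n) * ∏ x ∈ t, (1 - PowerSeries.X ^ x)) =
        PowerSeries.coeff j (∏ x ∈ t, (1 - PowerSeries.X ^ x)) := by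
      intro j hj
      rw [sub_mul, one_mul, map_sub, PowerSeries.coeff_X_pow_mul']
      rw [if_neg (by omega), sub_zero]
    exact ⟨by rw [key 0 (Nat.zero_le i), ih0], fun j hj hji => by rw [key j hji, ihj j hj hji]⟩

/-- stability: only factors with `n ≤ i` matter for `coeff i`. -/
lemma coeff_prod_stable (s : Finset ℕ) (i : ℕ) :
    PowerSeries.coeff (R := ℝ) i (∏ n ∈ s, (1 - PowerSeries.X ^ n)) =
    PowerSeries.coeff (R := ℝ) i (∏ n ∈ s.filter (· ≤ i), (1 - PowerSeries.X ^ n)) := by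
  classical
  rw [← Finset.prod_filter_mul_prod_filter_not s (· ≤ i)]
  obtain ⟨h0, hj⟩ := coeff_prod_high (s.filter (fun n => ¬ n ≤ i)) i
    (fun n hn => by simpa using (Finset.mem_filter.mp hn).2)
  exact coeff_mul_high _ _ i h0 hj

lemma coeff_euler_trunc (i M : ℕ) (hiM : i ≤ M) :
    PowerSeries.coeff i euler =
    PowerSeries.coeff i (∏ n ∈ Finset.Icc 1 M, (1 - PowerSeries.X ^ n)) := by
  rw [euler, coeff_mk, coeff_prod_stable (Finset.Icc 1 M) i, coeff_prod_stable (Finset.Icc 1 i) i]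
  congr 2
  ext n
  simp only [Finset.mem_filter, Finset.mem_Icc]
  omega

lemma coeff_eulerNotDvd_trunc (d i M : ℕ) (hiM : i ≤ M) :
    PowerSeries.coeff i (eulerNotDvd d) =
    PowerSeries.coeff i
      (∏ n ∈ (Finset.Icc 1 M).filter (fun n => ¬ d ∣ n), (1 - PowerSeries.X ^ n)) := by
  rw [eulerNotDvd, coeff_mk,
    coeff_prod_stable ((Finset.Icc 1 M).filter (fun n => ¬ d ∣ n)) i,
    coeff_prod_stable ((Finset.Icc 1 i).filter (fun n => ¬ d ∣ n)) i]
  congr 2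
  ext n
  simp only [Finset.mem_filter, Finset.mem_Icc]
  constructor
  · rintro ⟨⟨⟨h1, h2⟩, h3⟩, h4⟩
    exact ⟨⟨⟨h1, le_trans h4 hiM⟩, h3⟩, h4⟩
  · rintro ⟨⟨⟨h1, h2⟩, h3⟩, h4⟩
    exact ⟨⟨⟨h1, h4⟩, h3⟩, h4⟩

lemma substPow_prod (d : ℕ) (hd : 0 < d) (s : Finset ℕ) (f : ℕ → PowerSeries ℝ) :
    substPow d (∏ n ∈ s, f n) = ∏ n ∈ s, substPow d (f n) := by
  classical
  induction s using Finset.induction_on with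
  | empty => simpa using substPow_one d hd
  | @insert n t hns ih =>
    rw [Finset.prod_insert hns, Finset.prod_insert hns, substPow_mul d hd, ih]

lemma substPow_one_sub_X_pow (d n : ℕ) (hd : 0 < d) :
    substPow d (1 - PowerSeries.X ^ n) = 1 - PowerSeries.X ^ (d * n) := by
  rw [substPow_sub, substPow_one d hd, substPow_X_pow d n hd]

lemma coeff_substPow_euler (d N j : ℕ) (hd : 0 < d) (hj : j ≤ N) :
    PowerSeries.coeff j (substPow d euler) =
    PowerSeries.coeff j
      (∏ n ∈ (Finset.Icc 1 N).filter (fun n => d ∣ n), (1 - PowerSeries.X ^ n)) := by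
  have himg : (Finset.Icc 1 N).filter (fun n => d ∣ n) =
      (Finset.Icc 1 (N / d)).image (fun m => d * m) := by
    ext n
    simp only [Finset.mem_filter, Finset.mem_Icc, Finset.mem_image]
    constructor
    · rintro ⟨⟨h1, h2⟩, hdn⟩
      refine ⟨n / d, ⟨(Nat.one_le_div_iff hd).mpr (Nat.le_of_dvd (by omega) hdn),
        Nat.div_le_div_right h2⟩, Nat.mul_div_cancel' hdn⟩
    · rintro ⟨m, ⟨hm1, hm2⟩, rfl⟩
      refine ⟨⟨Nat.one_le_iff_ne_zero.mpr (by positivity), ?_⟩, Dvd.intro m rfl⟩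
      calc d * m ≤ d * (N / d) := Nat.mul_le_mul_left d hm2
        _ ≤ N := Nat.mul_div_le N d
  have hinj : ∀ x ∈ Finset.Icc 1 (N / d), ∀ y ∈ Finset.Icc 1 (N / d),
      d * x = d * y → x = y := fun x _ y _ hh => Nat.eq_of_mul_eq_mul_left hd hh
  rw [himg, Finset.prod_image hinj]
  have : (∏ m ∈ Finset.Icc 1 (N / d), (1 - PowerSeries.X ^ (d * m))) =
      substPow d (∏ m ∈ Finset.Icc 1 (N / d), (1 - PowerSeries.X ^ m)) := by
    rw [substPow_prod d hd]
    exact Finset.prod_congr rfl fun m _ => (substPow_one_sub_X_pow d m hd).symm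
  rw [this, coeff_substPow, coeff_substPow]
  by_cases hdj : d ∣ j
  · rw [if_pos hdj, if_pos hdj, coeff_euler_trunc (j / d) (N / d) (Nat.div_le_div_right hj)]
  · rw [if_neg hdj, if_neg hdj]

lemma euler_factor (d : ℕ) (hd : 0 < d) :
    euler = eulerNotDvd d * substPow d euler := by
  ext N
  rw [euler, coeff_mk, ← Finset.prod_filter_mul_prod_filter_not (Finset.Icc 1 N) (fun n => d ∣ n),
    mul_comm, PowerSeries.coeff_mul, PowerSeries.coeff_mul]
  refine Finset.sum_congr rfl ?_
  rintro ⟨i, j⟩ hp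
  have hij : i + j = N := HasAntidiagonal.mem_antidiagonal.mp hp
  rw [← coeff_eulerNotDvd_trunc d i N (by omega), ← coeff_substPow_euler d N j hd (by omega)]
  rfl

lemma constCoeff_one_sub_X_pow (n : ℕ) (hn : 0 < n) :
    PowerSeries.constantCoeff (R := ℝ) (1 - PowerSeries.X ^ n) = 1 := by
  rw [map_sub, map_one, map_pow, PowerSeries.constantCoeff_X, zero_pow (by omega), sub_zero]

lemma constCoeff_prod_one_sub (s : Finset ℕ) (hs : ∀ n ∈ s, 0 < n) :
    PowerSeries.constantCoeff (R := ℝ) (∏ n ∈ s, (1 - PowerSeries.X ^ n)) = 1 := by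
  rw [map_prod]
  exact Finset.prod_eq_one fun n hn => constCoeff_one_sub_X_pow n (hs n hn)

noncomputable def geom (n : ℕ) : PowerSeries ℝ :=
  PowerSeries.mk fun j => if n ∣ j then (1 : ℝ) else 0

lemma geom_mul (n : ℕ) (hn : 0 < n) : geom n * (1 - PowerSeries.X ^ n) = 1 := by
  ext N
  rw [mul_sub, mul_one, map_sub, PowerSeries.coeff_mul_X_pow', geom, coeff_mk,
    PowerSeries.coeff_one]
  rcases eq_or_ne N 0 with rfl | hN
  · simp [hn.ne']
  · rw [if_neg hN]
    by_cases hle : n ≤ N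
    · rw [if_pos hle, coeff_mk]
      have : n ∣ N ↔ n ∣ N - n := by
        constructor
        · intro hh; exact (Nat.dvd_sub hh dvd_rfl)
        · intro hh; have := Nat.dvd_add hh (dvd_refl n); rwa [Nat.sub_add_cancel hle] at this
      by_cases hdd : n ∣ N
      · rw [if_pos hdd, if_pos (this.mp hdd), sub_self]
      · rw [if_neg hdd, if_neg (fun hc => hdd (this.mpr hc)), sub_self]
    · rw [if_neg hle, sub_zero, if_neg fun hdd => hle (Nat.le_of_dvd (by omega) hdd)]

lemma inv_one_sub_X_pow (n : ℕ) (hn : 0 < n) :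
    (1 - PowerSeries.X ^ n)⁻¹ = geom n := by
  symm
  rw [PowerSeries.eq_inv_iff_mul_eq_one (by rw [constCoeff_one_sub_X_pow n hn]; norm_num)]
  exact geom_mul n hn

lemma coeff_mul_nonneg (f g : PowerSeries ℝ) (hf : ∀ j, 0 ≤ PowerSeries.coeff j f)
    (hg : ∀ j, 0 ≤ PowerSeries.coeff j g) (N : ℕ) :
    0 ≤ PowerSeries.coeff N (f * g) := by
  rw [PowerSeries.coeff_mul]
  exact Finset.sum_nonneg fun p _ => mul_nonneg (hf p.1) (hg p.2)

lemma coeff_prod_nonneg (s : Finset ℕ) (f : ℕ → PowerSeries ℝ)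
    (hf : ∀ n ∈ s, ∀ j, 0 ≤ PowerSeries.coeff j (f n)) (N : ℕ) :
    0 ≤ PowerSeries.coeff N (∏ n ∈ s, f n) := by
  classical
  induction s using Finset.induction_on generalizing N with
  | empty => simp [PowerSeries.coeff_one]; positivity
  | @insert n t hns ih =>
    rw [Finset.prod_insert hns]
    exact coeff_mul_nonneg _ _ (hf n (Finset.mem_insert_self n t))
      (fun j => ih (fun x hx => hf x (Finset.mem_insert_of_mem hx)) j) N

lemma coeff_inv_prod_nonneg (s : Finset ℕ) (hs : ∀ n ∈ s, 0 < n) (N : ℕ) :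
    0 ≤ PowerSeries.coeff (R := ℝ) N ((∏ n ∈ s, (1 - PowerSeries.X ^ n))⁻¹) := by
  classical
  have hprod : (∏ n ∈ s, geom n) * (∏ n ∈ s, (1 - PowerSeries.X ^ n)) = 1 := by
    rw [← Finset.prod_mul_distrib]
    exact Finset.prod_eq_one fun n hn => geom_mul n (hs n hn)
  have hinv : (∏ n ∈ s, (1 - PowerSeries.X ^ n))⁻¹ = ∏ n ∈ s, geom n := by
    symm
    rw [PowerSeries.eq_inv_iff_mul_eq_one (by rw [constCoeff_prod_one_sub s hs]; norm_num)]
    exact hprod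
  rw [hinv]
  refine coeff_prod_nonneg s _ (fun n _ j => ?_) N
  rw [geom, coeff_mk]
  split_ifs <;> norm_num

lemma coeff_mul_low_zero (a hh : PowerSeries ℝ) (i : ℕ)
    (h0 : ∀ j, j ≤ i → PowerSeries.coeff j hh = 0) :
    PowerSeries.coeff i (a * hh) = 0 := by
  rw [PowerSeries.coeff_mul]
  refine Finset.sum_eq_zero fun p hp => ?_
  have := HasAntidiagonal.mem_antidiagonal.mp hp
  rw [h0 p.2 (by omega), mul_zero]

lemma coeff_inv_congr (f g : PowerSeries ℝ) (hf : PowerSeries.constantCoeff f ≠ 0)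
    (hg : PowerSeries.constantCoeff g ≠ 0) (i : ℕ)
    (hfg : ∀ j, j ≤ i → PowerSeries.coeff j f = PowerSeries.coeff j g) :
    PowerSeries.coeff i f⁻¹ = PowerSeries.coeff i g⁻¹ := by
  have key : f⁻¹ - g⁻¹ = f⁻¹ * g⁻¹ * (g - f) := by
    have h1 : f⁻¹ * f = 1 := PowerSeries.inv_mul_cancel f hf
    have h2 : g⁻¹ * g = 1 := PowerSeries.inv_mul_cancel g hg
    calc f⁻¹ - g⁻¹ = f⁻¹ * (g⁻¹ * g) - (f⁻¹ * f) * g⁻¹ := by rw [h1, h2, mul_one, one_mul]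
    _ = f⁻¹ * g⁻¹ * (g - f) := by ring
  have : PowerSeries.coeff i (f⁻¹ - g⁻¹) = 0 := by
    rw [key]
    exact coeff_mul_low_zero _ _ i fun j hj => by rw [map_sub, hfg j hj, sub_self]
  rw [map_sub] at this
  linarith

lemma constCoeff_eulerNotDvd (d : ℕ) : PowerSeries.constantCoeff (eulerNotDvd d) = 1 := by
  rw [← PowerSeries.coeff_zero_eq_constantCoeff, eulerNotDvd, coeff_mk]
  simp [PowerSeries.coeff_one]

lemma constCoeff_euler : PowerSeries.constantCoeff euler = 1 := by
  rw [← PowerSeries.coeff_zero_eq_constantCoeff, euler, coeff_mk]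
  simp [PowerSeries.coeff_one]

lemma coeff_inv_eulerNotDvd_nonneg (d : ℕ) (i : ℕ) :
    0 ≤ PowerSeries.coeff i (eulerNotDvd d)⁻¹ := by
  set s := (Finset.Icc 1 i).filter (fun n => ¬ d ∣ n) with hsdef
  have hs : ∀ n ∈ s, 0 < n := fun n hn => by
    have := (Finset.mem_filter.mp hn).1
    simp only [Finset.mem_Icc] at this
    omega
  have heq : PowerSeries.coeff i (eulerNotDvd d)⁻¹ =
      PowerSeries.coeff i ((∏ n ∈ s, (1 - PowerSeries.X ^ n))⁻¹) := by
    refine coeff_inv_congr _ _ ?_ ?_ i ?_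
    · rw [constCoeff_eulerNotDvd]; norm_num
    · rw [constCoeff_prod_one_sub s hs]; norm_num
    · intro j hj
      exact coeff_eulerNotDvd_trunc d j i hj
  rw [heq]
  exact coeff_inv_prod_nonneg s hs i

lemma substPow_id (f : PowerSeries ℝ) : substPow 1 f = f := by
  ext N; simp [coeff_substPow]

lemma eulerNotDvd_one : eulerNotDvd 1 = 1 := by
  ext N
  rw [eulerNotDvd, coeff_mk]
  have : (Finset.Icc 1 N).filter (fun n => ¬ (1:ℕ) ∣ n) = ∅ := by
    refine Finset.filter_eq_empty_iff.mpr fun n _ => by simp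
  rw [this]
  simp

lemma substPow_inv (d : ℕ) (hd : 0 < d) (f : PowerSeries ℝ)
    (hf : PowerSeries.constantCoeff f ≠ 0) :
    substPow d f⁻¹ = (substPow d f)⁻¹ := by
  have hconst : PowerSeries.constantCoeff (substPow d f) ≠ 0 := by
    rw [← PowerSeries.coeff_zero_eq_constantCoeff, coeff_substPow, if_pos (dvd_zero d),
      Nat.zero_div, PowerSeries.coeff_zero_eq_constantCoeff]
    exact hf
  rw [PowerSeries.eq_inv_iff_mul_eq_one hconst, ← substPow_mul d hd,
    PowerSeries.inv_mul_cancel f hf, substPow_one d hd]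

lemma euler_inv_factor (d : ℕ) (hd : 0 < d) :
    euler⁻¹ = (eulerNotDvd d)⁻¹ * (substPow d euler)⁻¹ := by
  conv_lhs => rw [euler_factor d hd]
  rw [PowerSeries.mul_inv_rev]
  exact mul_comm _ _

lemma natCast_eq_C (p : ℕ) : ((p : ℕ) : PowerSeries ℝ) = PowerSeries.C (p : ℝ) :=
  (map_natCast (PowerSeries.C) p).symm

lemma step_A (p k : ℕ) (hp : 0 < p) :
    (eulerNotDvd (p ^ k))⁻¹ * substPow (p ^ k) (Mser p) =
    euler⁻¹ * (substPow (p ^ k) h - (p : PowerSeries ℝ) * substPow (p ^ (k + 1)) h) := by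
  have hpk : 0 < p ^ k := Nat.pow_pos hp
  have hconst : PowerSeries.constantCoeff euler ≠ 0 := by rw [constCoeff_euler]; norm_num
  rw [Mser, substPow_mul _ hpk, substPow_inv _ hpk _ hconst, substPow_sub,
    natCast_eq_C, substPow_C_mul, substPow_comp _ _ hpk hp, ← pow_succ,
    euler_inv_factor (p ^ k) hpk]
  ring

lemma main_id (p m : ℕ) (hp : 0 < p) :
    euler⁻¹ * (h - (p : PowerSeries ℝ) ^ m * substPow (p ^ m) h) =
    ∑ k ∈ Finset.range m,
      (p : PowerSeries ℝ) ^ k * ((eulerNotDvd (p ^ k))⁻¹ * substPow (p ^ k) (Mser p)) := by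
  have : ∀ k, (p : PowerSeries ℝ) ^ k * ((eulerNotDvd (p ^ k))⁻¹ * substPow (p ^ k) (Mser p)) =
      (p : PowerSeries ℝ) ^ k * substPow (p ^ k) h * euler⁻¹ -
      (p : PowerSeries ℝ) ^ (k + 1) * substPow (p ^ (k + 1)) h * euler⁻¹ := by
    intro k
    rw [step_A p k hp]
    ring
  rw [Finset.sum_congr rfl fun k _ => this k, Finset.sum_range_sub'
    (fun k => (p : PowerSeries ℝ) ^ k * substPow (p ^ k) h * euler⁻¹)]
  simp only [pow_zero, one_mul, substPow_id]
  ring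

lemma coeff_h_zero : PowerSeries.coeff 0 h = 0 := by
  rw [h, coeff_mk]
  simp

lemma coeff_Mser_zero (p : ℕ) : PowerSeries.coeff 0 (Mser p) = 0 := by
  rw [Mser, PowerSeries.coeff_zero_eq_constantCoeff, map_mul, map_sub, map_mul]
  have h1 : PowerSeries.constantCoeff h = 0 := by
    rw [← PowerSeries.coeff_zero_eq_constantCoeff]; exact coeff_h_zero
  have h2 : PowerSeries.constantCoeff (substPow p h) = 0 := by
    rw [← PowerSeries.coeff_zero_eq_constantCoeff, coeff_substPow, if_pos (dvd_zero p),
      Nat.zero_div, coeff_h_zero]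
  rw [h1, h2, mul_zero, sub_zero, mul_zero]

/-- Theorem 1.2 of Xiong: positivity of `M_p` implies positivity of `M_{p^m}`. -/
theorem xiong_thm_1_2 (p : ℕ) (hp : p.Prime)
    (hMp : ∀ n : ℕ, 1 ≤ n → 0 < PowerSeries.coeff n (Mser p))
    (m : ℕ) (hm : 2 ≤ m) :
    ∀ n : ℕ, 1 ≤ n →
      0 < PowerSeries.coeff n
        (euler⁻¹ * (h - (p : PowerSeries ℝ) ^ m * substPow (p ^ m) h)) := by
  intro n hn
  have hppos : 0 < p := hp.pos
  rw [main_id p m hppos, map_sum]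
  have hMnonneg : ∀ j, 0 ≤ PowerSeries.coeff j (Mser p) := by
    intro j
    rcases Nat.eq_zero_or_pos j with rfl | hj
    · rw [coeff_Mser_zero]
    · exact le_of_lt (hMp j hj)
  have hcoeff : ∀ k j, PowerSeries.coeff j
      ((p : PowerSeries ℝ) ^ k * ((eulerNotDvd (p ^ k))⁻¹ * substPow (p ^ k) (Mser p))) =
      (p : ℝ) ^ k * PowerSeries.coeff j
        ((eulerNotDvd (p ^ k))⁻¹ * substPow (p ^ k) (Mser p)) := by
    intro k j
    rw [natCast_eq_C, ← map_pow, PowerSeries.coeff_C_mul]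
  have hNk : ∀ k j, 0 ≤ PowerSeries.coeff j
      ((eulerNotDvd (p ^ k))⁻¹ * substPow (p ^ k) (Mser p)) := by
    intro k j
    refine coeff_mul_nonneg _ _ (coeff_inv_eulerNotDvd_nonneg _) (fun i => ?_) j
    rw [coeff_substPow]
    split_ifs with hdvd
    · exact hMnonneg _
    · exact le_rfl
  refine Finset.sum_pos' (fun k _ => ?_) ⟨0, Finset.mem_range.mpr (by omega), ?_⟩
  · rw [hcoeff k n]
    exact mul_nonneg (pow_nonneg (Nat.cast_nonneg p) k) (hNk k n)
  · rw [hcoeff 0 n, pow_zero, pow_zero, eulerNotDvd_one, inv_one, one_mul, substPow_id, one_mul]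
    exact hMp n hn
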